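/- Let $G : [T,+\infty) \to \mathbb{R}$ be decreasing with $G(T) < +\infty$, and let $g(t) = \int_t^{+\infty} c(t_1)e^{-t_1}dt_1$ for positive continuous $c$ with $g(T) < \infty$. Suppose that for all $t_1 \ge T$ and $t_0 \ge 0$: $\frac{G(t_1) - G(t_1+t_0)}{g(t_1) - g(t_1+t_0)} \le \liminf_{B\to 0^+} \frac{G(t_0+t_1) - G(t_0+t_1+B)}{g(t_0+t_1) - g(t_0+t_1+B)}$, and that $G$ is lower semicontinuous. Then $r \mapsto G(g^{-1}(r))$ is concave on $(0, g(T)]$. -/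

import Mathlib

open MeasureTheory Real Set Filter
open Topology

lemma lsc_exists_min {f : ℝ → ℝ} {s : Set ℝ} (hs : IsCompact s) (hne : s.Nonempty)
    (hf : LowerSemicontinuousOn f s) : ∃ x ∈ s, ∀ y ∈ s, f x ≤ f y := by
  by_contra hcon
  push_neg at hcon
  choose! y hy hylt using hcon
  have key : ∀ x ∈ s, ∃ U ∈ 𝓝 x, ∀ z ∈ U ∩ s, f (y x) < f z := by
    intro x hx
    have h := hf x hx (f (y x)) (hylt x hx)
    rw [eventually_nhdsWithin_iff] at h
    rcases (eventually_iff_exists_mem.1 h) with ⟨U, hU, hUp⟩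
    exact ⟨U, hU, fun z hz => hUp z hz.1 hz.2⟩
  choose! U hU hUp using key
  rcases hs.elim_nhds_subcover' (fun x hx => U x) (fun x hx => hU x hx) with ⟨t, ht⟩
  have htne : t.Nonempty := by
    rcases hne with ⟨x0, hx0⟩
    rcases mem_iUnion₂.1 (ht hx0) with ⟨i, hi, _⟩
    exact ⟨i, hi⟩
  rcases t.exists_min_image (fun x : s => f (y x)) htne with ⟨i, hit, hmin⟩
  have hyi : y i ∈ s := hy i i.2
  rcases mem_iUnion₂.1 (ht hyi) with ⟨j, hjt, hjU⟩
  have h1 : f (y j) < f (y i) := hUp j j.2 (y i) ⟨hjU, hyi⟩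
  exact absurd (hmin j hjt) (not_le.2 h1)

theorem stmt_16 (T : ℝ) (c : ℝ → ℝ)
    (hc_cont : ContinuousOn c (Ioi T))
    (hc_pos : ∀ t ∈ Ioi T, 0 < c t)
    (hc_int : IntegrableOn (fun t => c t * exp (-t)) (Ioi T))
    (g : ℝ → ℝ) (hg : ∀ t, g t = ∫ t1 in Ioi t, c t1 * exp (-t1))
    (ginv : ℝ → ℝ)
    (hginv₁ : ∀ t ∈ Ici T, ginv (g t) = t)
    (hginv₂ : ∀ r ∈ Ioc 0 (g T), g (ginv r) = r)
    (G : ℝ → ℝ)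
    (hG_dec : AntitoneOn G (Ici T))
    (hG_lsc : LowerSemicontinuousOn G (Ici T))
    (hquot : ∀ t1 ≥ T, ∀ t0 ≥ (0 : ℝ),
      (G t1 - G (t1 + t0)) / (g t1 - g (t1 + t0)) ≤
        liminf (fun B => (G (t0 + t1) - G (t0 + t1 + B)) / (g (t0 + t1) - g (t0 + t1 + B)))
          (nhdsWithin 0 (Ioi 0))) :
    ConcaveOn ℝ (Ioc 0 (g T)) (fun r => G (ginv r)) := by
  set f : ℝ → ℝ := fun t => c t * exp (-t) with hf_def
  have hf_pos : ∀ t ∈ Ioi T, 0 < f t := fun t ht => mul_pos (hc_pos t ht) (exp_pos _)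
  have hf_int : IntegrableOn f (Ioi T) := hc_int
  have hf_int' : ∀ t, T ≤ t → IntegrableOn f (Ioi t) :=
    fun t ht => hf_int.mono_set (Ioi_subset_Ioi ht)
  have hf_intIoc : ∀ s t : ℝ, T ≤ s → IntegrableOn f (Ioc s t) :=
    fun s t hs => hf_int.mono_set (fun x hx => lt_of_le_of_lt hs hx.1)
  -- splitting of g
  have hsplit : ∀ s t : ℝ, T ≤ s → s ≤ t → g s = (∫ x in Ioc s t, f x) + g t := by
    intro s t hs hst
    rw [hg s, hg t, ← setIntegral_union (Ioc_disjoint_Ioi le_rfl) measurableSet_Ioi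
      (hf_intIoc s t hs) (hf_int' t (le_trans hs hst)), Ioc_union_Ioi_eq_Ioi hst]
  -- nonnegativity and positivity of g
  have hg_nonneg : ∀ t, T ≤ t → 0 ≤ g t := by
    intro t ht
    rw [hg t]
    exact setIntegral_nonneg measurableSet_Ioi
      (fun x hx => le_of_lt (hf_pos x (lt_of_le_of_lt ht hx)))
  -- strict antitonicity of g on [T, ∞)
  have hg_lt : ∀ s t : ℝ, T ≤ s → s < t → g t < g s := by
    intro s t hs hst
    have hpos : 0 < ∫ x in Ioc s t, f x := by
      have := intervalIntegral.intervalIntegral_pos_of_pos_on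
        ((intervalIntegrable_iff_integrableOn_Ioc_of_le hst.le).2 (hf_intIoc s t hs))
        (fun x hx => hf_pos x (lt_of_le_of_lt hs hx.1)) hst
      rwa [intervalIntegral.integral_of_le hst.le] at this
    have := hsplit s t hs hst.le
    linarith
  -- continuity of g on [T, ∞)
  have hg_cont : ContinuousOn g (Ici T) := by
    intro t ht
    have hIcc : ContinuousOn (fun x => ∫ u in Ioc T x, f u) (Icc T (t + 1)) :=
      intervalIntegral.continuousOn_primitive
        ((integrableOn_Icc_iff_integrableOn_Ioc).2 (hf_intIoc T (t + 1) le_rfl))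
    have heq : ∀ x ∈ Ici T, g x = g T - ∫ u in Ioc T x, f u := by
      intro x hx
      have := hsplit T x le_rfl hx
      linarith
    have h1 : ContinuousWithinAt (fun x => g T - ∫ u in Ioc T x, f u) (Icc T (t + 1)) t :=
      (continuousOn_const.sub hIcc) t ⟨ht, by linarith⟩
    have h2 : ContinuousWithinAt (fun x => g T - ∫ u in Ioc T x, f u) (Ici T) t := by
      have h1' := h1.mono (show Ici T ∩ Iio (t+1) ⊆ Icc T (t + 1) from
        fun x hx => ⟨hx.1, hx.2.le⟩)
      rwa [ContinuousWithinAt, ← nhdsWithin_restrict _ (mem_Iio.2 (lt_add_one t))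
        isOpen_Iio] at h1'
    exact (h2.congr heq (heq t ht))
  -- ginv maps Ioc 0 (g T) into [T, ∞)
  have hginv_mem : ∀ r ∈ Ioc 0 (g T), T ≤ ginv r ∧ g (ginv r) = r := by
    intro r hr
    have hUnion : (⋃ n : ℕ, Ioc T (T + n)) = Ioi T := by
      ext x
      simp only [mem_iUnion, mem_Ioc, mem_Ioi]
      constructor
      · rintro ⟨n, hn, -⟩; exact hn
      · intro hx
        rcases exists_nat_ge (x - T) with ⟨n, hn⟩
        exact ⟨n, hx, by linarith⟩
    have htend : Tendsto (fun n : ℕ => ∫ x in Ioc T (T + n), f x) atTop (𝓝 (g T)) := by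
      have := tendsto_setIntegral_of_monotone (μ := volume) (f := f)
        (s := fun n : ℕ => Ioc T (T + n))
        (fun n => measurableSet_Ioc)
        (fun m n hmn => Ioc_subset_Ioc le_rfl (by have := (Nat.cast_le (α := ℝ)).2 hmn; linarith))
        (by rw [hUnion]; exact hf_int)
      rw [hUnion, ← hg T] at this
      exact this
    have htend' : Tendsto (fun n : ℕ => g (T + n)) atTop (𝓝 0) := by
      have heq : ∀ n : ℕ, g (T + n) = g T - ∫ x in Ioc T (T + n), f x := by
        intro n
        have := hsplit T (T + n) le_rfl (le_add_of_nonneg_right n.cast_nonneg)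
        linarith
      rw [show (0:ℝ) = g T - g T by ring]
      simp_rw [heq]
      exact (tendsto_const_nhds.sub htend)
    have hev : ∀ᶠ n : ℕ in atTop, g (T + n) < r := htend'.eventually_lt_const hr.1
    rcases hev.exists with ⟨n, hn⟩
    have hTn : T ≤ T + (n:ℝ) := le_add_of_nonneg_right n.cast_nonneg
    have := intermediate_value_Icc' hTn (hg_cont.mono (fun x hx => hx.1))
    rcases this ⟨hn.le, hr.2⟩ with ⟨t, htmem, hgt⟩
    have : ginv r = t := by rw [← hgt, hginv₁ t htmem.1]
    rw [this, hgt]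
    exact ⟨htmem.1, rfl⟩
  -- key claim: chord lies below the graph
  have key : ∀ a ∈ Ioc 0 (g T), ∀ b ∈ Ioc 0 (g T), a < b → ∀ z ∈ Ioo a b,
      G (ginv a) + (G (ginv b) - G (ginv a)) / (b - a) * (z - a) ≤ G (ginv z) := by
    intro a ha b hb hab z hz
    by_contra hcon
    push_neg at hcon
    have hzmem : z ∈ Ioc 0 (g T) := ⟨lt_trans ha.1 hz.1, le_trans hz.2.le hb.2⟩
    obtain ⟨hta, hga⟩ := hginv_mem a ha
    obtain ⟨htb, hgb⟩ := hginv_mem b hb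
    obtain ⟨htz, hgz⟩ := hginv_mem z hzmem
    set ta := ginv a
    set tb := ginv b
    set tz := ginv z
    have horder : ∀ r r' : ℝ, T ≤ ginv r → T ≤ ginv r' → g (ginv r) = r → g (ginv r') = r' →
        r < r' → ginv r' < ginv r := by
      intro r r' h1 h2 h3 h4 h5
      by_contra hle
      push_neg at hle
      rcases eq_or_lt_of_le hle with heq | hlt
      · rw [← h3, ← h4, heq] at h5; exact lt_irrefl _ h5
      · have := hg_lt _ _ h1 hlt
        rw [h3, h4] at this
        exact absurd h5 (not_lt.2 this.le)
    have htb_lt_ta : tb < ta := horder a b hta htb hga hgb hab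
    have htb_lt_tz : tb < tz := horder z b htz htb hgz hgb hz.2
    have htz_lt_ta : tz < ta := horder a z hta htz hga hgz hz.1
    have hba : (0:ℝ) < b - a := by linarith [hab]
    set k := (G tb - G ta) / (b - a) with hk
    have hkba : k * (b - a) = G tb - G ta := div_mul_cancel₀ _ hba.ne'
    set H : ℝ → ℝ := fun t => G t - (G ta + k * (g t - a)) with hH
    have hHta : H ta = 0 := by simp [hH, hga]
    have hHtb : H tb = 0 := by
      simp only [hH, hgb]
      linarith [hkba]
    have hHtz : H tz < 0 := by
      simp only [hH, hgz]
      linarith [hcon]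
    have hIccsub : Icc tb ta ⊆ Ici T := fun x hx => le_trans htb hx.1
    have hHlsc : LowerSemicontinuousOn H (Icc tb ta) := by
      have hcont : ContinuousOn (fun t => -(G ta + k * (g t - a))) (Icc tb ta) := by
        exact (continuousOn_const.add (continuousOn_const.mul
          (((hg_cont.mono hIccsub)).sub continuousOn_const))).neg
      have h := (hG_lsc.mono hIccsub).add hcont.lowerSemicontinuousOn
      simp only [hH, sub_eq_add_neg]
      exact h
    obtain ⟨ts, hts, htsmin⟩ := lsc_exists_min isCompact_Icc
      ⟨tb, left_mem_Icc.2 htb_lt_ta.le⟩ hHlsc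
    set m := H ts with hm
    have hm_neg : m < 0 :=
      lt_of_le_of_lt (htsmin tz ⟨htb_lt_tz.le, htz_lt_ta.le⟩) hHtz
    have htb_lt_ts : tb < ts := by
      rcases eq_or_lt_of_le hts.1 with heq | hlt
      · exfalso; rw [hm, ← heq, hHtb] at hm_neg; exact lt_irrefl _ hm_neg
      · exact hlt
    have hts_lt_ta : ts < ta := by
      rcases eq_or_lt_of_le hts.2 with heq | hlt
      · exfalso; rw [hm, heq, hHta] at hm_neg; exact lt_irrefl _ hm_neg
      · exact hlt
    have hTts : T ≤ ts := hIccsub hts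
    -- apply the quotient hypothesis
    have hq := hquot tb htb (ts - tb) (by linarith)
    rw [show tb + (ts - tb) = ts by ring, show ts - tb + tb = ts by ring] at hq
    -- left-hand side exceeds k
    have hgts_lt_b : g ts < b := by rw [← hgb]; exact hg_lt tb ts htb htb_lt_ts
    have hGts : G ts = m + G ta + k * (g ts - a) := by simp [hm, hH]; ring
    have hGtb : G tb = G ta + k * (b - a) := by linarith [hkba]
    have hlhs : k < (G tb - G ts) / (g tb - g ts) := by
      rw [hgb]
      rw [lt_div_iff₀ (by linarith : (0:ℝ) < b - g ts)]
      have : G tb - G ts = k * (b - g ts) - m := by rw [hGtb, hGts]; ring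
      rw [this]
      linarith
    -- right-hand side is at most k
    have hev0 : ∀ᶠ B in 𝓝[>] (0:ℝ),
        0 ≤ (G ts - G (ts + B)) / (g ts - g (ts + B)) := by
      filter_upwards [self_mem_nhdsWithin] with B hB
      have hB' : (0:ℝ) < B := hB
      have hd : 0 < g ts - g (ts + B) := by
        have := hg_lt ts (ts + B) hTts (by linarith)
        linarith
      have hn : 0 ≤ G ts - G (ts + B) := by
        have := hG_dec (show ts ∈ Ici T from hTts)
          (show ts + B ∈ Ici T from by simp only [mem_Ici]; linarith) (by linarith)
        linarith
      exact div_nonneg hn hd.le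
    have hevk : ∀ᶠ B in 𝓝[>] (0:ℝ),
        (G ts - G (ts + B)) / (g ts - g (ts + B)) ≤ k := by
      filter_upwards [Ioc_mem_nhdsGT_of_mem
        ⟨le_refl (0:ℝ), show (0:ℝ) < ta - ts by linarith⟩] with B hB
      have hB0 : (0:ℝ) < B := hB.1
      have hBle : ts + B ≤ ta := by linarith [hB.2]
      have hmem : ts + B ∈ Icc tb ta := ⟨by linarith, hBle⟩
      have hHge : m ≤ H (ts + B) := htsmin _ hmem
      have hd : 0 < g ts - g (ts + B) := by
        have := hg_lt ts (ts + B) hTts (by linarith)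
        linarith
      rw [div_le_iff₀ hd]
      have hGtsB : G (ts + B) = H (ts + B) + G ta + k * (g (ts + B) - a) := by
        simp [hH]; ring
      rw [hGts, hGtsB]
      nlinarith [hHge]
    have hlim_le : liminf (fun B => (G ts - G (ts + B)) / (g ts - g (ts + B)))
        (𝓝[>] (0:ℝ)) ≤ k := by
      apply Filter.liminf_le_of_le ⟨0, hev0⟩
      intro b' hb'
      rcases (hb'.and hevk).exists with ⟨B, h1, h2⟩
      exact le_trans h1 h2
    exact absurd (lt_of_lt_of_le hlhs (le_trans hq hlim_le)) (lt_irrefl k)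
  -- assemble concavity
  have main : ∀ x ∈ Ioc 0 (g T), ∀ y ∈ Ioc 0 (g T), x < y → ∀ p q : ℝ,
      0 ≤ p → 0 ≤ q → p + q = 1 →
      p * G (ginv x) + q * G (ginv y) ≤ G (ginv (p * x + q * y)) := by
    intro x hx y hy hxy p q hp hq hpq
    rcases eq_or_lt_of_le hq with hq0 | hq0
    · have hp1 : p = 1 := by linarith
      rw [← hq0, hp1]
      simp
    rcases eq_or_lt_of_le hp with hp0 | hp0
    · have hq1 : q = 1 := by linarith
      rw [← hp0, hq1]
      simp
    have hyx : (0:ℝ) < y - x := by linarith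
    have hzx : p * x + q * y - x = q * (y - x) := by linear_combination x * hpq
    have hyz : y - (p * x + q * y) = p * (y - x) := by linear_combination (-y) * hpq
    have hzIoo : p * x + q * y ∈ Ioo x y := by
      constructor
      · nlinarith
      · nlinarith
    have := key x hx y hy hxy (p * x + q * y) hzIoo
    have hslope : (G (ginv y) - G (ginv x)) / (y - x) * (p * x + q * y - x)
        = q * (G (ginv y) - G (ginv x)) := by
      rw [hzx]
      field_simp
    rw [hslope] at this
    have hcomb : p * G (ginv x) + q * G (ginv y)
        = G (ginv x) + q * (G (ginv y) - G (ginv x)) := by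
      linear_combination (G (ginv x)) * hpq
    linarith
  constructor
  · exact convex_Ioc 0 (g T)
  · intro x hx y hy p q hp hq hpq
    simp only [smul_eq_mul]
    rcases lt_trichotomy x y with hxy | hxy | hxy
    · exact main x hx y hy hxy p q hp hq hpq
    · subst hxy
      have h1 : p * x + q * x = x := by linear_combination x * hpq
      rw [h1]
      have h2 : p * G (ginv x) + q * G (ginv x) = G (ginv x) := by
        linear_combination (G (ginv x)) * hpq
      linarith
    · have := main y hy x hx hxy q p hq hp (by linarith)
      calc p * G (ginv x) + q * G (ginv y) = q * G (ginv y) + p * G (ginv x) := by ring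
        _ ≤ G (ginv (q * y + p * x)) := this
        _ = G (ginv (p * x + q * y)) := by ring_nf
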